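/- Let d ≥ 1 and let U = V + g satisfy assumptions (A0) and (A1), and suppose ‖g''‖_{L^q(ℝ)} < ∞ for some q ≥ 1. Then, at inverse temperature β = 1 (i.e. for the single-site measure ν_a with density proportional to exp(−2 Σ_{k=1}^{2d} U(a_k − t))), the variance of the single-site measure is bounded uniformly in the boundary values: there is a finite constant K, depending only on d, C₂, q and ‖g''‖_{L^q(ℝ)}, such that Var_{ν_a}(id) ≤ K for all a ∈ ℝ^{2d}. -/

import Mathlib

open MeasureTheory Real Filter
open scoped NNReal ENNReal

set_option maxHeartbeats 1000000

noncomputable section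

/-- Boltzmann weight of the single odd site given the `2d` neighbouring values `a`. -/
def siteWeight (β : ℝ) (d : ℕ) (U : ℝ → ℝ) (a : Fin (2*d) → ℝ) (t : ℝ) : ℝ :=
  Real.exp (-(2*β) * ∑ k, U (a k - t))

/-- Normalising constant `Z_a`. -/
def Zsite (β : ℝ) (d : ℕ) (U : ℝ → ℝ) (a : Fin (2*d) → ℝ) : ℝ :=
  ∫ t : ℝ, siteWeight β d U a t

/-- Single-site measure `ν_a`. -/
def nuSite (β : ℝ) (d : ℕ) (U : ℝ → ℝ) (a : Fin (2*d) → ℝ) : Measure ℝ :=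
  volume.withDensity fun t => ENNReal.ofReal (siteWeight β d U a t / Zsite β d U a)

/-- Coarse-grained potential `F(a) = -log Z_a`. -/
def Fcg (β : ℝ) (d : ℕ) (U : ℝ → ℝ) (a : Fin (2*d) → ℝ) : ℝ :=
  - Real.log (Zsite β d U a)

/-- Covariance of two functions under a measure on `ℝ`. -/
def covM (ν : Measure ℝ) (f g : ℝ → ℝ) : ℝ :=
  (∫ t, f t * g t ∂ν) - (∫ t, f t ∂ν) * (∫ t, g t ∂ν)

/-- Variance of the identity function under a measure on `ℝ`. -/
def varId (ν : Measure ℝ) : ℝ := covM ν (fun t => t) (fun t => t)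

/-- First partial derivative. -/
def pd {n : ℕ} (Φ : (Fin n → ℝ) → ℝ) (i : Fin n) (a : Fin n → ℝ) : ℝ :=
  fderiv ℝ Φ a (Pi.single i 1)

/-- Second partial derivative. -/
def pd2 {n : ℕ} (Φ : (Fin n → ℝ) → ℝ) (i j : Fin n) (a : Fin n → ℝ) : ℝ :=
  fderiv ℝ (fun x => fderiv ℝ Φ x (Pi.single i 1)) a (Pi.single j 1)

/-- `L^q(ℝ)` norm. -/
def LqNorm (f : ℝ → ℝ) (q : ℝ) : ℝ := (∫ t : ℝ, |f t| ^ q) ^ (1/q)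

/-- Quadratic growth from a critical point, for a `C²` function whose second derivative is
bounded below by a constant minus an integrable nonnegative perturbation. -/
lemma aux_quad {h h' h'' w : ℝ → ℝ} {t₀ K1 M : ℝ}
    (hh : ∀ x, HasDerivAt h (h' x) x)
    (hh' : ∀ x, HasDerivAt h' (h'' x) x)
    (hh''c : Continuous h'')
    (hw0 : ∀ u, 0 ≤ w u) (hwint : Integrable w) (hwc : Continuous w)
    (hwM : (∫ u, w u) ≤ M)
    (hlb : ∀ u, K1 - w u ≤ h'' u)
    (hcrit : h' t₀ = 0) (t : ℝ) :
    K1 / 2 * (t - t₀) ^ 2 - M * |t - t₀| ≤ h t - h t₀ := by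
  have hh'c : Continuous h' :=
    (Differentiable.continuous fun x => (hh' x).differentiableAt)
  have hint_w : ∀ x y : ℝ, x ≤ y → (∫ u in x..y, w u) ≤ M := by
    intro x y hxy
    rw [intervalIntegral.integral_of_le hxy]
    exact le_trans (setIntegral_le_integral hwint (Filter.Eventually.of_forall hw0)) hwM
  have hlin : ∀ x y c e : ℝ, (∫ s in x..y, (c * (s - t₀) + e)) =
      (c / 2 * (y - t₀)^2 + e * y) - (c / 2 * (x - t₀)^2 + e * x) := by
    intro x y c e
    have hφ : ∀ s : ℝ, HasDerivAt (fun s => c / 2 * (s - t₀)^2 + e * s) (c * (s - t₀) + e) s := by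
      intro s
      have h1 : HasDerivAt (fun s : ℝ => s - t₀) 1 s := (hasDerivAt_id s).sub_const t₀
      have h2 := ((h1.pow 2).const_mul (c/2)).add ((hasDerivAt_id s).const_mul e)
      exact h2.congr_deriv (by ring)
    exact intervalIntegral.integral_eq_sub_of_hasDerivAt (fun s _ => hφ s)
      (((continuous_const.mul (continuous_id.sub continuous_const)).add
        continuous_const).intervalIntegrable _ _)
  have key1 : ∀ s, t₀ ≤ s → K1 * (s - t₀) - M ≤ h' s := by
    intro s hs
    have hFTC : (∫ u in t₀..s, h'' u) = h' s - h' t₀ :=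
      intervalIntegral.integral_eq_sub_of_hasDerivAt (fun x _ => hh' x)
        (hh''c.intervalIntegrable _ _)
    have h1 : (∫ u in t₀..s, (K1 - w u)) ≤ ∫ u in t₀..s, h'' u :=
      intervalIntegral.integral_mono_on hs
        ((continuous_const.sub hwc).intervalIntegrable _ _)
        (hh''c.intervalIntegrable _ _) (fun x _ => hlb x)
    have h2 : (∫ u in t₀..s, (K1 - w u)) = K1 * (s - t₀) - ∫ u in t₀..s, w u := by
      rw [intervalIntegral.integral_sub intervalIntegrable_const (hwc.intervalIntegrable _ _)]
      simp [intervalIntegral.integral_const]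
      ring
    have h3 := hint_w t₀ s hs
    rw [hcrit] at hFTC
    linarith [hFTC ▸ h1, h2]
  have key2 : ∀ s, s ≤ t₀ → h' s ≤ M - K1 * (t₀ - s) := by
    intro s hs
    have hFTC : (∫ u in s..t₀, h'' u) = h' t₀ - h' s :=
      intervalIntegral.integral_eq_sub_of_hasDerivAt (fun x _ => hh' x)
        (hh''c.intervalIntegrable _ _)
    have h1 : (∫ u in s..t₀, (K1 - w u)) ≤ ∫ u in s..t₀, h'' u :=
      intervalIntegral.integral_mono_on hs
        ((continuous_const.sub hwc).intervalIntegrable _ _)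
        (hh''c.intervalIntegrable _ _) (fun x _ => hlb x)
    have h2 : (∫ u in s..t₀, (K1 - w u)) = K1 * (t₀ - s) - ∫ u in s..t₀, w u := by
      rw [intervalIntegral.integral_sub intervalIntegrable_const (hwc.intervalIntegrable _ _)]
      simp [intervalIntegral.integral_const]
      ring
    have h3 := hint_w s t₀ hs
    rw [hcrit] at hFTC
    linarith [hFTC ▸ h1, h2]
  rcases le_total t₀ t with hc | hc
  · have hFTC : (∫ s in t₀..t, h' s) = h t - h t₀ :=
      intervalIntegral.integral_eq_sub_of_hasDerivAt (fun x _ => hh x)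
        (hh'c.intervalIntegrable _ _)
    have h1 : (∫ s in t₀..t, (K1 * (s - t₀) + (-M))) ≤ ∫ s in t₀..t, h' s :=
      intervalIntegral.integral_mono_on hc
        (((continuous_const.mul (continuous_id.sub continuous_const)).add
          continuous_const).intervalIntegrable _ _)
        (hh'c.intervalIntegrable _ _) (fun x hx => by linarith [key1 x hx.1])
    rw [hlin t₀ t K1 (-M)] at h1
    rw [abs_of_nonneg (by linarith : (0:ℝ) ≤ t - t₀)]
    rw [hFTC] at h1
    nlinarith [h1]
  · have hFTC : (∫ s in t..t₀, h' s) = h t₀ - h t :=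
      intervalIntegral.integral_eq_sub_of_hasDerivAt (fun x _ => hh x)
        (hh'c.intervalIntegrable _ _)
    have h1 : (∫ s in t..t₀, h' s) ≤ (∫ s in t..t₀, (K1 * (s - t₀) + M)) :=
      intervalIntegral.integral_mono_on hc
        (hh'c.intervalIntegrable _ _)
        (((continuous_const.mul (continuous_id.sub continuous_const)).add
          continuous_const).intervalIntegrable _ _)
        (fun x hx => by linarith [key2 x hx.2])
    rw [hlin t t₀ K1 M] at h1
    rw [abs_of_nonpos (by linarith : t - t₀ ≤ (0:ℝ))]
    rw [hFTC] at h1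
    nlinarith [h1]

lemma aux_comp_sub {F : ℝ → ℝ} (hF : Differentiable ℝ F) (c t : ℝ) :
    HasDerivAt (fun s => F (c - s)) (-(deriv F (c - t))) t := by
  have h1 : HasDerivAt (fun s : ℝ => c - s) (-1) t := by
    exact ((hasDerivAt_const t c).sub (hasDerivAt_id t)).congr_deriv (by ring)
  have h2 := ((hF (c - t)).hasDerivAt).comp t h1
  exact h2.congr_deriv (by ring)

lemma aux_A {Z Iq I1 I2c t₀ : ℝ} (hZ : 0 < Z) (h : I2c = Iq - (2 * t₀) * I1 + t₀ ^ 2 * Z) :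
    Z⁻¹ * Iq - (Z⁻¹ * I1) * (Z⁻¹ * I1) ≤ Z⁻¹ * I2c := by
  have h1 : Z⁻¹ * Z = 1 := inv_mul_cancel₀ (ne_of_gt hZ)
  have key : Z⁻¹ * (Iq - (2 * t₀) * I1 + t₀ ^ 2 * Z) - (Z⁻¹ * Iq - (Z⁻¹ * I1) * (Z⁻¹ * I1)) =
      (Z⁻¹ * I1 - t₀) ^ 2 + t₀ ^ 2 * (Z⁻¹ * Z - 1) := by ring
  rw [h1] at key
  rw [h]
  nlinarith [sq_nonneg (Z⁻¹ * I1 - t₀), key]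

lemma aux_B {D M τ : ℝ} (hD : 0 < D) :
    D / 2 * τ ^ 2 - M ^ 2 / (2 * D) ≤ D * τ ^ 2 - M * τ := by
  have h1 : 0 ≤ (D * τ - M) ^ 2 := sq_nonneg _
  have h2 : D / 2 * τ ^ 2 - M ^ 2 / (2 * D) - (D * τ ^ 2 - M * τ) =
      -((D * τ - M) ^ 2 / (2 * D)) := by field_simp; ring
  nlinarith [div_nonneg h1 (by linarith : (0:ℝ) ≤ 2 * D)]

lemma aux_C {A b t S CA' : ℝ} (hA : 0 < A) (h5 : A * (b - t) ^ 2 - CA' ≤ S) :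
    A * t ^ 2 - (2 * A * b ^ 2 + 2 * CA') ≤ 2 * S := by
  nlinarith [sq_nonneg (t - 2 * b)]

lemma aux_D (t t₀ : ℝ) : |t| ≤ (1 + |t₀|) + 1 * (t - t₀) ^ 2 := by
  nlinarith [abs_sub_abs_le_abs_sub t t₀, sq_abs (t - t₀), abs_nonneg (t - t₀),
    sq_nonneg (|t - t₀| - 1)]

lemma aux_E (t t₀ : ℝ) : |t * t| ≤ 2 * t₀ ^ 2 + 2 * (t - t₀) ^ 2 := by
  rw [abs_mul_self]
  nlinarith [sq_nonneg (t - 2 * t₀)]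

/-- **Statement 16** (uniform bound (4.15) on the single-site variance at `β = 1`). -/
theorem statement16
    {d : ℕ} {A B C₀ C₁ C₂ q : ℝ} {U V g : ℝ → ℝ}
    (hd : 1 ≤ d)
    -- (A0)
    (hUcont : Continuous U) (hA : 0 < A) (hA0 : ∀ η : ℝ, A * η ^ 2 - B ≤ U η)
    -- (A1)
    (hsum : ∀ s, U s = V s + g s)
    (hV : ContDiff ℝ 2 V) (hg : ContDiff ℝ 2 g)
    (hC₁ : 0 < C₁) (hC₁₂ : C₁ < C₂) (hC₂₀ : C₂ < C₀)
    (hV'' : ∀ s, C₁ ≤ deriv (deriv V) s ∧ deriv (deriv V) s ≤ C₂)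
    (hg'' : ∀ s, -C₀ ≤ deriv (deriv g) s ∧ deriv (deriv g) s ≤ 0)
    -- finiteness of the `L^q` norm of `g''`
    (hq : 1 ≤ q)
    (hgq : Integrable (fun t : ℝ => |deriv (deriv g) t| ^ q)) :
    ∃ K : ℝ, ∀ a : Fin (2*d) → ℝ, varId (nuSite 1 d U a) ≤ K := by
  have hC₂pos : 0 < C₂ := lt_trans hC₁ hC₁₂
  have hC0pos : 0 < C₀ := lt_trans hC₂pos hC₂₀
  have hq0 : 0 < q := lt_of_lt_of_le one_pos hq
  have hdpos : (0:ℝ) < (d:ℝ) := by exact_mod_cast Nat.lt_of_lt_of_le Nat.zero_lt_one hd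
  -- regularity of V and g
  obtain ⟨hVd, hVd1, hV''c⟩ :
      Differentiable ℝ V ∧ Differentiable ℝ (deriv V) ∧ Continuous (deriv (deriv V)) := by
    have h2 : ContDiff ℝ (1+1) V := by norm_num; exact hV
    rw [contDiff_succ_iff_deriv] at h2
    have h1 := contDiff_one_iff_deriv.mp h2.2.2
    exact ⟨h2.1, h1.1, h1.2⟩
  obtain ⟨hgd, hgd1, hg''c⟩ :
      Differentiable ℝ g ∧ Differentiable ℝ (deriv g) ∧ Continuous (deriv (deriv g)) := by
    have h2 : ContDiff ℝ (1+1) g := by norm_num; exact hg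
    rw [contDiff_succ_iff_deriv] at h2
    have h1 := contDiff_one_iff_deriv.mp h2.2.2
    exact ⟨h2.1, h1.1, h1.2⟩
  -- constants
  set ε : ℝ := C₁ / 2 with hεdef
  have hεpos : 0 < ε := by positivity
  set Cw : ℝ := C₀ * ε ^ (-q) with hCwdef
  have hCwpos : 0 < Cw := mul_pos hC0pos (Real.rpow_pos_of_pos hεpos _)
  set Mg : ℝ := ∫ u, |deriv (deriv g) u| ^ q with hMgdef
  have hMg0 : 0 ≤ Mg := integral_nonneg fun u => Real.rpow_nonneg (abs_nonneg _) q
  set M : ℝ := 2 * (2 * (d:ℝ)) * (Cw * Mg) with hMdef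
  have hM0 : 0 ≤ M := by positivity
  have hdC₁ : 0 < (d:ℝ) * C₁ := mul_pos hdpos hC₁
  set c : ℝ := (d:ℝ) * C₁ / 2 with hcdef
  have hcpos : 0 < c := by positivity
  set K' : ℝ := M ^ 2 / (2 * ((d:ℝ) * C₁)) with hK'def
  set J : ℝ := ∫ s : ℝ, s ^ 2 * Real.exp (-c * s ^ 2) with hJdef
  have hJint : Integrable (fun s : ℝ => s ^ 2 * Real.exp (-c * s ^ 2)) := by
    have := integrable_rpow_mul_exp_neg_mul_sq hcpos (by norm_num : (-1:ℝ) < 2)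
    simpa [Real.rpow_natCast] using this
  have hJ0 : 0 ≤ J := integral_nonneg fun s => by positivity
  set K2 : ℝ := 2 * (2 * (d:ℝ)) * C₂ with hK2def
  have hK2pos : 0 < K2 := by positivity
  set Z₁ : ℝ := Real.sqrt (π / (K2 / 2)) with hZ₁def
  have hZ₁pos : 0 < Z₁ := Real.sqrt_pos.mpr (by positivity)
  -- the pointwise bound |g''| ≤ ε + Cw * |g''|^q
  have habs : ∀ x : ℝ, |deriv (deriv g) x| ≤ ε + Cw * |deriv (deriv g) x| ^ q := by
    intro x
    set y : ℝ := |deriv (deriv g) x| with hydef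
    have hy0 : 0 ≤ y := abs_nonneg _
    rcases le_or_gt y ε with hc1 | hc1
    · have : 0 ≤ Cw * y ^ q := mul_nonneg hCwpos.le (Real.rpow_nonneg hy0 q)
      linarith
    · have hyC₀ : y ≤ C₀ := by
        rw [hydef, abs_le]
        exact ⟨(hg'' x).1, le_trans (hg'' x).2 hC0pos.le⟩
      have h5 : ε ^ q ≤ y ^ q := Real.rpow_le_rpow hεpos.le hc1.le hq0.le
      have hεq : (0:ℝ) < ε ^ q := Real.rpow_pos_of_pos hεpos q
      have h6 : ε ^ (-q) * ε ^ q = 1 := by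
        rw [Real.rpow_neg hεpos.le]
        exact inv_mul_cancel₀ (ne_of_gt hεq)
      have h7 : C₀ * (ε ^ (-q) * ε ^ q) ≤ C₀ * (ε ^ (-q) * y ^ q) := by
        apply mul_le_mul_of_nonneg_left _ hC0pos.le
        exact mul_le_mul_of_nonneg_left h5 (Real.rpow_pos_of_pos hεpos _).le
      rw [h6, mul_one] at h7
      have : Cw * y ^ q = C₀ * (ε ^ (-q) * y ^ q) := by rw [hCwdef]; ring
      rw [this]
      linarith
  refine ⟨Real.exp K' * J / Z₁, fun a => ?_⟩
  -- the effective Hamiltonian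
  set H : ℝ → ℝ := fun t => 2 * ∑ k, (V (a k - t) + g (a k - t)) with hHdef
  have hρeq : ∀ t, siteWeight 1 d U a t = Real.exp (-(H t)) := by
    intro t
    unfold siteWeight
    congr 1
    rw [show (∑ k, U (a k - t)) = ∑ k, (V (a k - t) + g (a k - t)) from
      Finset.sum_congr rfl fun k _ => hsum _]
    ring
  have hinner : ∀ k : Fin (2*d), Continuous fun t : ℝ => a k - t :=
    fun k => continuous_const.sub continuous_id
  have hHc : Continuous H := by
    apply continuous_const.mul
    apply continuous_finset_sum
    intro k _
    exact (hVd.continuous.comp (hinner k)).add (hgd.continuous.comp (hinner k))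
  -- minimiser of H
  have hk₀ : 0 < 2*d := by omega
  set k₀ : Fin (2*d) := ⟨0, hk₀⟩ with hk₀def
  set CA : ℝ := 2*A*(a k₀)^2 + 2*(2*(d:ℝ))*B with hCAdef
  have hHlb : ∀ t, A * t ^ 2 - CA ≤ H t := by
    intro t
    have h1 : ∀ k ∈ Finset.univ, A*(a k - t)^2 - B ≤ V (a k - t) + g (a k - t) := by
      intro k _
      rw [← hsum]
      exact hA0 _
    have h2 := Finset.sum_le_sum h1
    have h3 : (∑ k : Fin (2*d), (A*(a k - t)^2 - B)) =
        (∑ k : Fin (2*d), A*(a k - t)^2) - (2*(d:ℝ))*B := by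
      rw [Finset.sum_sub_distrib, Finset.sum_const, Finset.card_univ, Fintype.card_fin]
      push_cast
      ring
    have h4 : A*(a k₀ - t)^2 ≤ ∑ k : Fin (2*d), A*(a k - t)^2 :=
      Finset.single_le_sum (f := fun k => A*(a k - t)^2) (fun k _ => by positivity)
        (Finset.mem_univ k₀)
    have h5 : A*(a k₀ - t)^2 - (2*(d:ℝ))*B ≤ ∑ k, (V (a k - t) + g (a k - t)) := by
      rw [h3] at h2
      linarith
    have : H t = 2 * ∑ k, (V (a k - t) + g (a k - t)) := rfl
    rw [this, hCAdef]
    have h6 := aux_C hA h5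
    linarith
  obtain ⟨t₀, ht₀⟩ : ∃ t₀, ∀ y, H t₀ ≤ H y := by
    apply hHc.exists_forall_le
    apply tendsto_atTop_mono hHlb
    have h1 : Tendsto (fun t : ℝ => t ^ 2) (cocompact ℝ) atTop := by
      have h2 : Tendsto (fun y : ℝ => y ^ 2) atTop atTop := tendsto_pow_atTop two_ne_zero
      have h3 := h2.comp (tendsto_norm_cocompact_atTop (E := ℝ))
      refine h3.congr fun t => ?_
      simp [Real.norm_eq_abs, sq_abs]
    have h4 := h1.const_mul_atTop hA
    simpa [sub_eq_add_neg] using tendsto_atTop_add_const_right _ (-CA) h4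
  -- derivatives of H
  set H1 : ℝ → ℝ := fun t => -2 * ∑ k, (deriv V (a k - t) + deriv g (a k - t)) with hH1def
  set H2 : ℝ → ℝ := fun t => 2 * ∑ k, (deriv (deriv V) (a k - t) + deriv (deriv g) (a k - t))
    with hH2def
  have hHD : ∀ t, HasDerivAt H (H1 t) t := by
    intro t
    have hs := HasDerivAt.sum (fun k (_ : k ∈ Finset.univ) =>
      (aux_comp_sub hVd (a k) t).add (aux_comp_sub hgd (a k) t))
    have h2 := hs.const_mul 2
    rw [Finset.sum_fn] at h2
    refine h2.congr_deriv ?_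
    rw [hH1def]
    simp only
    rw [Finset.mul_sum, Finset.mul_sum]
    apply Finset.sum_congr rfl
    intro k _
    ring
  have hH1D : ∀ t, HasDerivAt H1 (H2 t) t := by
    intro t
    have hs := HasDerivAt.sum (fun k (_ : k ∈ Finset.univ) =>
      (aux_comp_sub hVd1 (a k) t).add (aux_comp_sub hgd1 (a k) t))
    have h2 := hs.const_mul (-2)
    rw [Finset.sum_fn] at h2
    refine h2.congr_deriv ?_
    rw [hH2def]
    simp only
    rw [Finset.mul_sum, Finset.mul_sum]
    apply Finset.sum_congr rfl
    intro k _
    ring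
  have hH2c : Continuous H2 := by
    apply continuous_const.mul
    apply continuous_finset_sum
    intro k _
    exact (hV''c.comp (hinner k)).add (hg''c.comp (hinner k))
  have hH1t₀ : H1 t₀ = 0 := by
    have hloc : IsLocalMin H t₀ := Filter.Eventually.of_forall ht₀
    rw [← (hHD t₀).deriv]
    exact hloc.deriv_eq_zero
  -- the perturbation w
  set w : ℝ → ℝ := fun u => 2 * ∑ k, Cw * |deriv (deriv g) (a k - u)| ^ q with hwdef
  have hw0 : ∀ u, 0 ≤ w u := by
    intro u
    apply mul_nonneg (by norm_num)
    apply Finset.sum_nonneg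
    intro k _
    exact mul_nonneg hCwpos.le (Real.rpow_nonneg (abs_nonneg _) q)
  have hwc : Continuous w := by
    apply continuous_const.mul
    apply continuous_finset_sum
    intro k _
    exact continuous_const.mul
      (((hg''c.comp (hinner k)).abs).rpow_const fun x => Or.inr hq0.le)
  have hwterm_int : ∀ k : Fin (2*d),
      Integrable (fun u => Cw * |deriv (deriv g) (a k - u)| ^ q) := by
    intro k
    exact (hgq.comp_sub_left (a k)).const_mul Cw
  have hwint : Integrable w := by
    apply Integrable.const_mul
    exact integrable_finset_sum _ fun k _ => hwterm_int k
  have hwM : (∫ u, w u) ≤ M := by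
    have h1 : (∫ u, w u) = 2 * ∑ k : Fin (2*d), ∫ u, Cw * |deriv (deriv g) (a k - u)| ^ q := by
      rw [hwdef]
      rw [integral_const_mul]
      congr 1
      exact integral_finset_sum _ fun k _ => hwterm_int k
    have h2 : ∀ k : Fin (2*d), (∫ u, Cw * |deriv (deriv g) (a k - u)| ^ q) = Cw * Mg := by
      intro k
      rw [integral_const_mul, hMgdef]
      congr 1
      exact integral_sub_left_eq_self (fun u => |deriv (deriv g) u| ^ q) volume (a k)
    rw [h1]
    rw [Finset.sum_congr rfl fun k _ => h2 k, Finset.sum_const, Finset.card_univ,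
      Fintype.card_fin, hMdef]
    apply le_of_eq
    push_cast
    ring
  -- lower bound on H'' : K1 - w ≤ H2 with K1 = 2dC₁
  have hlbH2 : ∀ u, 2*(d:ℝ)*C₁ - w u ≤ H2 u := by
    intro u
    have hterm : ∀ k ∈ Finset.univ, C₁/2 - Cw * |deriv (deriv g) (a k - u)| ^ q ≤
        deriv (deriv V) (a k - u) + deriv (deriv g) (a k - u) := by
      intro k _
      have h1 := (hV'' (a k - u)).1
      have h3 := habs (a k - u)
      have h4 : -|deriv (deriv g) (a k - u)| ≤ deriv (deriv g) (a k - u) := neg_abs_le _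
      rw [hεdef] at h3
      linarith
    have h2 := Finset.sum_le_sum hterm
    have h3 : (∑ k : Fin (2*d), (C₁/2 - Cw * |deriv (deriv g) (a k - u)| ^ q)) =
        (2*(d:ℝ))*(C₁/2) - ∑ k : Fin (2*d), Cw * |deriv (deriv g) (a k - u)| ^ q := by
      rw [Finset.sum_sub_distrib, Finset.sum_const, Finset.card_univ, Fintype.card_fin]
      push_cast
      ring
    rw [h3] at h2
    have : H2 u = 2 * ∑ k, (deriv (deriv V) (a k - u) + deriv (deriv g) (a k - u)) := rfl
    have hwu : w u = 2 * ∑ k, Cw * |deriv (deriv g) (a k - u)| ^ q := rfl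
    rw [this, hwu]
    linarith
  -- upper bound on H'' : H2 ≤ K2
  have hubH2 : ∀ u, H2 u ≤ K2 := by
    intro u
    have hterm : ∀ k ∈ Finset.univ,
        deriv (deriv V) (a k - u) + deriv (deriv g) (a k - u) ≤ C₂ := by
      intro k _
      linarith [(hV'' (a k - u)).2, (hg'' (a k - u)).2]
    have h2 := Finset.sum_le_sum hterm
    rw [Finset.sum_const, Finset.card_univ, Fintype.card_fin] at h2
    simp only [nsmul_eq_mul] at h2
    have : H2 u = 2 * ∑ k, (deriv (deriv V) (a k - u) + deriv (deriv g) (a k - u)) := rfl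
    rw [this, hK2def]
    push_cast at h2 ⊢
    linarith
  -- the two quadratic bounds
  have hlow : ∀ t, (2*(d:ℝ)*C₁) / 2 * (t - t₀) ^ 2 - M * |t - t₀| ≤ H t - H t₀ :=
    aux_quad hHD hH1D hH2c hw0 hwint hwc hwM hlbH2 hH1t₀
  have hup : ∀ t, H t - H t₀ ≤ K2 / 2 * (t - t₀) ^ 2 := by
    intro t
    have h0int : Integrable (fun _ : ℝ => (0:ℝ)) := integrable_zero _ _ _
    have := aux_quad (h := fun t => -(H t)) (h' := fun t => -(H1 t)) (h'' := fun t => -(H2 t))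
      (w := fun _ => (0:ℝ)) (t₀ := t₀) (K1 := -K2) (M := 0)
      (fun x => (hHD x).neg) (fun x => (hH1D x).neg) hH2c.neg
      (fun u => le_refl 0) h0int continuous_const (by simp)
      (fun u => by simpa using neg_le_neg (hubH2 u)) (by show -(H1 t₀) = (0:ℝ); rw [hH1t₀]; ring) t
    simp only [neg_div, neg_mul, mul_zero, zero_mul, sub_zero] at this
    linarith [this]
  -- pointwise exponential bounds
  have hK'eq : K' * (2 * ((d:ℝ) * C₁)) = M ^ 2 := by
    rw [hK'def]
    field_simp
  have hHlow2 : ∀ t, H t₀ + (c * (t - t₀) ^ 2 - K') ≤ H t := by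
    intro t
    have h1 := hlow t
    have h2 : |t - t₀| ^ 2 = (t - t₀) ^ 2 := sq_abs _
    have h4 := aux_B (M := M) (τ := |t - t₀|) hdC₁
    rw [h2] at h4
    rw [hcdef, hK'def]
    have h5 : (d:ℝ) * C₁ / 2 = 2 * (d:ℝ) * C₁ / 2 / 2 := by ring
    have h6 : (2*(d:ℝ)*C₁) / 2 = (d:ℝ) * C₁ := by ring
    rw [h6] at h1
    linarith
  have hexp_up : ∀ t, Real.exp (-(H t)) ≤
      Real.exp (K' - H t₀) * Real.exp (-c * (t - t₀) ^ 2) := by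
    intro t
    rw [← Real.exp_add]
    exact Real.exp_le_exp.mpr (by linarith [hHlow2 t])
  have hexp_lo : ∀ t, Real.exp (-(H t₀)) * Real.exp (-(K2/2) * (t - t₀) ^ 2) ≤
      Real.exp (-(H t)) := by
    intro t
    rw [← Real.exp_add]
    exact Real.exp_le_exp.mpr (by linarith [hup t])
  -- integrability machinery
  have hρc : Continuous fun t => Real.exp (-(H t)) := Real.continuous_exp.comp hHc.neg
  have hdom : ∀ α β : ℝ, Integrable (fun t =>
      Real.exp (K' - H t₀) * ((α + β * (t - t₀) ^ 2) * Real.exp (-c * (t - t₀) ^ 2))) := by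
    intro α β
    have h1 : Integrable (fun s : ℝ => (α + β * s ^ 2) * Real.exp (-c * s ^ 2)) := by
      have ha := (integrable_exp_neg_mul_sq hcpos).const_mul α
      have hb := hJint.const_mul β
      exact (ha.add hb).congr (ae_of_all _ fun s => by simp only [Pi.add_apply]; ring)
    exact ((h1.comp_sub_right t₀).const_mul _)
  have hbound : ∀ (P : ℝ → ℝ) (α β : ℝ), Continuous P →
      (∀ t, |P t| ≤ α + β * (t - t₀) ^ 2) →
      Integrable (fun t => P t * Real.exp (-(H t))) := by
    intro P α β hPc hPb
    refine Integrable.mono' (hdom α β) ((hPc.mul hρc).aestronglyMeasurable)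
      (ae_of_all _ fun t => ?_)
    have h1 := hexp_up t
    have h2 := hPb t
    have hα : 0 ≤ α + β * (t - t₀) ^ 2 := le_trans (abs_nonneg _) h2
    rw [norm_mul, Real.norm_eq_abs, Real.norm_eq_abs, abs_of_pos (Real.exp_pos _)]
    calc |P t| * Real.exp (-(H t))
        ≤ (α + β * (t - t₀) ^ 2) * (Real.exp (K' - H t₀) * Real.exp (-c * (t - t₀) ^ 2)) :=
          mul_le_mul h2 h1 (Real.exp_pos _).le hα
      _ = Real.exp (K' - H t₀) * ((α + β * (t - t₀) ^ 2) * Real.exp (-c * (t - t₀) ^ 2)) := by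
          ring
  have hρint : Integrable (fun t => Real.exp (-(H t))) := by
    have := hbound (fun _ => 1) 1 0 continuous_const (fun t => by simp)
    simpa using this
  have htρint : Integrable (fun t => t * Real.exp (-(H t))) := by
    exact hbound (fun t => t) (1 + |t₀|) 1 continuous_id fun t => aux_D t t₀
  have ht2ρint : Integrable (fun t => (t * t) * Real.exp (-(H t))) := by
    refine hbound (fun t => t * t) (2 * t₀ ^ 2) 2 (continuous_id.mul continuous_id) fun t => ?_
    show |t * t| ≤ 2 * t₀ ^ 2 + 2 * (t - t₀) ^ 2
    exact aux_E t t₀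
  have hc2ρint : Integrable (fun t => (t - t₀) ^ 2 * Real.exp (-(H t))) := by
    refine hbound (fun t => (t - t₀) ^ 2) 0 1
      (((continuous_id.sub continuous_const).pow 2)) fun t => ?_
    show |(t - t₀) ^ 2| ≤ 0 + 1 * (t - t₀) ^ 2
    rw [abs_of_nonneg (sq_nonneg (t - t₀))]
    linarith
  -- Z and its lower bound
  have hZdef : Zsite 1 d U a = ∫ t, Real.exp (-(H t)) := by
    unfold Zsite
    exact integral_congr_ae (ae_of_all _ fun t => hρeq t)
  set Z : ℝ := Zsite 1 d U a with hZ
  have hZint : Z = ∫ t, Real.exp (-(H t)) := hZdef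
  have hZpos : 0 < Z := by
    rw [hZint]
    rw [integral_pos_iff_support_of_nonneg (fun t => (Real.exp_pos _).le) hρint]
    have hs : (Function.support fun t => Real.exp (-(H t))) = Set.univ :=
      Set.eq_univ_iff_forall.mpr fun t => (Real.exp_pos _).ne'
    rw [hs]
    simp
  have hZlb : Real.exp (-(H t₀)) * Z₁ ≤ Z := by
    have h1 : Integrable (fun t => Real.exp (-(H t₀)) * Real.exp (-(K2/2) * (t - t₀) ^ 2)) :=
      ((integrable_exp_neg_mul_sq (by positivity : (0:ℝ) < K2/2)).comp_sub_right t₀).const_mul _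
    have h2 := integral_mono h1 hρint (fun t => hexp_lo t)
    rw [hZint]
    refine le_trans (le_of_eq ?_) h2
    rw [integral_const_mul]
    congr 1
    rw [show (fun t : ℝ => Real.exp (-(K2/2) * (t - t₀) ^ 2)) =
      (fun t : ℝ => (fun s => Real.exp (-(K2/2) * s ^ 2)) (t - t₀)) from rfl]
    rw [integral_sub_right_eq_self (fun s => Real.exp (-(K2/2) * s ^ 2)) t₀]
    rw [hZ₁def]
    exact (integral_gaussian _).symm
  -- moment bound
  set I2c : ℝ := ∫ t, (t - t₀) ^ 2 * Real.exp (-(H t)) with hI2cdef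
  have hI2c0 : 0 ≤ I2c := integral_nonneg fun t => by positivity
  have hI2cub : I2c ≤ Real.exp (K' - H t₀) * J := by
    have h1 : Integrable (fun t =>
        Real.exp (K' - H t₀) * ((t - t₀) ^ 2 * Real.exp (-c * (t - t₀) ^ 2))) :=
      (hJint.comp_sub_right t₀).const_mul _
    have h2 : ∀ t, (t - t₀) ^ 2 * Real.exp (-(H t)) ≤
        Real.exp (K' - H t₀) * ((t - t₀) ^ 2 * Real.exp (-c * (t - t₀) ^ 2)) := by
      intro t
      have := mul_le_mul_of_nonneg_left (hexp_up t) (sq_nonneg (t - t₀))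
      calc (t - t₀) ^ 2 * Real.exp (-(H t))
          ≤ (t - t₀) ^ 2 * (Real.exp (K' - H t₀) * Real.exp (-c * (t - t₀) ^ 2)) := this
        _ = Real.exp (K' - H t₀) * ((t - t₀) ^ 2 * Real.exp (-c * (t - t₀) ^ 2)) := by ring
    have h3 := integral_mono hc2ρint h1 h2
    refine le_trans h3 (le_of_eq ?_)
    rw [integral_const_mul]
    congr 1
    rw [show (fun t : ℝ => (t - t₀) ^ 2 * Real.exp (-c * (t - t₀) ^ 2)) =
      (fun t : ℝ => (fun s => s ^ 2 * Real.exp (-c * s ^ 2)) (t - t₀)) from rfl]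
    rw [integral_sub_right_eq_self (fun s => s ^ 2 * Real.exp (-c * s ^ 2)) t₀]
  -- integrals with respect to the single-site measure
  have hν : ∀ f : ℝ → ℝ, (∫ t, f t ∂(nuSite 1 d U a)) =
      Z⁻¹ * ∫ t, f t * Real.exp (-(H t)) := by
    intro f
    unfold nuSite
    have hmeas : Measurable fun t => Real.toNNReal (siteWeight 1 d U a t / Zsite 1 d U a) := by
      apply measurable_real_toNNReal.comp
      apply Measurable.div_const
      have : Continuous fun t => siteWeight 1 d U a t := by
        rw [show (fun t => siteWeight 1 d U a t) = fun t => Real.exp (-(H t)) from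
          funext fun t => hρeq t]
        exact hρc
      exact this.measurable
    rw [show (fun t => ENNReal.ofReal (siteWeight 1 d U a t / Zsite 1 d U a)) =
      (fun t => ((Real.toNNReal (siteWeight 1 d U a t / Zsite 1 d U a) : ℝ≥0) : ℝ≥0∞))
      from rfl]
    rw [integral_withDensity_eq_integral_smul hmeas f]
    rw [← integral_const_mul]
    apply integral_congr_ae
    apply ae_of_all
    intro t
    have hnn : 0 ≤ siteWeight 1 d U a t / Zsite 1 d U a := by
      apply div_nonneg _ hZpos.le
      rw [hρeq t]
      exact (Real.exp_pos _).le
    simp only [NNReal.smul_def, smul_eq_mul]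
    rw [Real.coe_toNNReal _ hnn, hρeq t, ← hZ]
    field_simp
  -- put everything together
  set I1 : ℝ := ∫ t, t * Real.exp (-(H t)) with hI1def
  set Iq : ℝ := ∫ t, (t * t) * Real.exp (-(H t)) with hIqdef
  have hvar : varId (nuSite 1 d U a) = Z⁻¹ * Iq - (Z⁻¹ * I1) * (Z⁻¹ * I1) := by
    unfold varId covM
    simp only [hν]
    rw [hIqdef, hI1def]
  have hI2c_eq : I2c = Iq - (2 * t₀) * I1 + t₀ ^ 2 * Z := by
    have hsub : Integrable (fun t => t * t * Real.exp (-(H t)) -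
        2 * t₀ * (t * Real.exp (-(H t)))) := ht2ρint.sub (htρint.const_mul (2 * t₀))
    have hcI : Integrable (fun t => t₀ ^ 2 * Real.exp (-(H t))) := hρint.const_mul _
    have e1 : (∫ t, (t * t * Real.exp (-(H t)) - 2 * t₀ * (t * Real.exp (-(H t))) +
          t₀ ^ 2 * Real.exp (-(H t)))) =
        (∫ t, (t * t * Real.exp (-(H t)) - 2 * t₀ * (t * Real.exp (-(H t))))) +
          ∫ t, t₀ ^ 2 * Real.exp (-(H t)) := integral_add hsub hcI
    have e2 : (∫ t, (t * t * Real.exp (-(H t)) - 2 * t₀ * (t * Real.exp (-(H t))))) =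
        (∫ t, t * t * Real.exp (-(H t))) - ∫ t, 2 * t₀ * (t * Real.exp (-(H t))) :=
      integral_sub ht2ρint (htρint.const_mul (2 * t₀))
    have e3 : (∫ t, 2 * t₀ * (t * Real.exp (-(H t)))) = 2 * t₀ * I1 := by
      rw [hI1def]; exact integral_const_mul _ _
    have e4 : (∫ t, t₀ ^ 2 * Real.exp (-(H t))) = t₀ ^ 2 * Z := by
      rw [hZint]; exact integral_const_mul _ _
    have h1 : (fun t => (t - t₀) ^ 2 * Real.exp (-(H t))) = fun t =>
        t * t * Real.exp (-(H t)) - 2 * t₀ * (t * Real.exp (-(H t))) +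
          t₀ ^ 2 * Real.exp (-(H t)) := funext fun t => by ring
    rw [hI2cdef, h1, e1, e2, e3, e4, ← hIqdef]
  have hstepA : Z⁻¹ * Iq - (Z⁻¹ * I1) * (Z⁻¹ * I1) ≤ Z⁻¹ * I2c :=
    aux_A hZpos hI2c_eq
  have hstepB : Z⁻¹ * I2c ≤ Real.exp K' * J / Z₁ := by
    have hElo : 0 < Real.exp (-(H t₀)) * Z₁ := mul_pos (Real.exp_pos _) hZ₁pos
    have h1 : Z⁻¹ ≤ (Real.exp (-(H t₀)) * Z₁)⁻¹ := by
      apply inv_anti₀ hElo hZlb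
    calc Z⁻¹ * I2c ≤ (Real.exp (-(H t₀)) * Z₁)⁻¹ * I2c :=
          mul_le_mul_of_nonneg_right h1 hI2c0
      _ ≤ (Real.exp (-(H t₀)) * Z₁)⁻¹ * (Real.exp (K' - H t₀) * J) :=
          mul_le_mul_of_nonneg_left hI2cub (inv_nonneg.mpr hElo.le)
      _ = Real.exp K' * J / Z₁ := by
          rw [show Real.exp (K' - H t₀) = Real.exp K' * Real.exp (-(H t₀)) by
            rw [← Real.exp_add]; ring_nf]
          field_simp
  rw [hvar]
  exact le_trans hstepA hstepB

end
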